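/- For all integers n, N ≥ 1, the (−N,N)-linear graph on the set of integers {a ∈ ℤ : −nN < a < nN} is (n,(−N,N))-universal. -/

import Mathlib

open Filter


/-- A finite path: a list of consecutive edges, all belonging to `E`,
starting at `u` (when nonempty). -/
def FinPath {V : Type} (E : Set (V × ℤ × V)) (u : V) (p : List (V × ℤ × V)) : Prop :=
  (∀ e ∈ p, e ∈ E) ∧ List.Chain' (fun e e' => e.2.2 = e'.1) p ∧
    ∀ h : p ≠ [], (p.head h).1 = u

/-- The last vertex of a finite path starting at `u` (which is `u` itself for the empty path). -/
def lastV {V : Type} (u : V) (p : List (V × ℤ × V)) : V :=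
  (p.getLastD (u, 0, u)).2.2

/-- An infinite path: a sequence of consecutive edges, all belonging to `E`. -/
def InfPath {V : Type} (E : Set (V × ℤ × V)) (π : ℕ → V × ℤ × V) : Prop :=
  (∀ i, π i ∈ E) ∧ ∀ i, (π i).2.2 = (π (i + 1)).1

/-- The total weight of a finite path. -/
def pathWeight {V : Type} (p : List (V × ℤ × V)) : ℤ :=
  (p.map fun e => e.2.1).sum

/-- A sequence of integer weights satisfies mean payoff if the liminf of the
averages of its prefixes is nonnegative. -/
def MeanPayoffSeq (w : ℕ → ℤ) : Prop :=
  0 ≤ Filter.atTop.liminf (fun ℓ : ℕ => (∑ i ∈ Finset.range ℓ, (w i : ℝ)) / (ℓ : ℝ))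

/-- A graph (given by its edge set) satisfies mean payoff if all its infinite paths do. -/
def SatMP {V : Type} (E : Set (V × ℤ × V)) : Prop :=
  ∀ π : ℕ → V × ℤ × V, InfPath E π → MeanPayoffSeq (fun i => (π i).2.1)

/-- A cycle: a nonempty finite path whose first and last vertices coincide. -/
def IsCycle {V : Type} (E : Set (V × ℤ × V)) (p : List (V × ℤ × V)) : Prop :=
  p ≠ [] ∧ ∃ v, FinPath E v p ∧ lastV v p = v

/-- A `W`-graph: a finite set of vertices, edges labelled by weights in `W`,
and an initial vertex from which every vertex is reachable. -/
structure WGraph (W : Finset ℤ) where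
  V : Type
  fin : Fintype V
  E : Set (V × ℤ × V)
  init : V
  wt : ∀ e ∈ E, e.2.1 ∈ W
  reach : ∀ v : V, ∃ p, FinPath E init p ∧ lastV init p = v

attribute [instance] WGraph.fin

/-- The `W`-linear graph on a set `A ⊆ ℤ`: vertices are the elements of `A`, and
for `v, v' ∈ A` and `w ∈ W` there is an edge `(v, w, v')` whenever `v' - v ≤ w`. -/
def LinE (W : Finset ℤ) (A : Set ℤ) : Set (ℤ × ℤ × ℤ) :=
  {e | e.1 ∈ A ∧ e.2.2 ∈ A ∧ e.2.1 ∈ W ∧ e.2.2 - e.1 ≤ e.2.1}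

/-- A homomorphism of labelled graphs (no requirement on initial vertices). -/
def IsHom {V U : Type} (E : Set (V × ℤ × V)) (E' : Set (U × ℤ × U)) (φ : V → U) : Prop :=
  ∀ e ∈ E, (φ e.1, e.2.1, φ e.2.2) ∈ E'

/-- A graph (given by its edge set) is `(n,W)`-universal if it satisfies mean payoff and
every `(n,W)`-graph satisfying mean payoff admits a homomorphism into it. -/
def Universal (n : ℕ) (W : Finset ℤ) {U : Type} (EU : Set (U × ℤ × U)) : Prop :=
  SatMP EU ∧
    ∀ G : WGraph W, Fintype.card G.V ≤ n → SatMP G.E → ∃ φ : G.V → U, IsHom G.E EU φ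

/-- The set of weights `(-N, N)`: integers `w` with `-N < w < N`. -/
noncomputable def Wball (N : ℕ) : Finset ℤ := Finset.Ioo (-(N : ℤ)) (N : ℤ)

/-- `φ` is the distance function from the initial vertex: `φ v` is the minimum total
weight of a finite path from the initial vertex to `v`. -/
def IsDistFrom {W : Finset ℤ} (G : WGraph W) (φ : G.V → ℤ) : Prop :=
  ∀ v : G.V,
    (∃ p, FinPath G.E G.init p ∧ lastV G.init p = v ∧ pathWeight p = φ v) ∧
    ∀ p, FinPath G.E G.init p → lastV G.init p = v → φ v ≤ pathWeight p


/-! ### Auxiliary machinery -/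

lemma sum_range_mul_mod (g : ℕ → ℝ) (L k : ℕ) :
    ∑ i ∈ Finset.range (k * L), g (i % L) = k * ∑ i ∈ Finset.range L, g i := by
  induction k with
  | zero => simp
  | succ k ih =>
      have h : (k + 1) * L = k * L + L := by ring
      rw [h, Finset.sum_range_add, ih]
      have : ∀ x ∈ Finset.range L, g ((k * L + x) % L) = g x := by
        intro x hx
        rw [Nat.add_comm, Nat.add_mul_mod_self_right, Nat.mod_eq_of_lt (Finset.mem_range.mp hx)]
      rw [Finset.sum_congr rfl this]
      push_cast
      ring

/-- A function-based path: `L` consecutive edges in `E`. -/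
def GoodF {V : Type} (E : Set (V × ℤ × V)) (L : ℕ) (f : ℕ → V) (w : ℕ → ℤ) : Prop :=
  ∀ i < L, (f i, w i, f (i + 1)) ∈ E

lemma meanPayoffSeq_of_bdd_sums (w : ℕ → ℤ) (C D : ℝ) (hC : 0 ≤ C) (hD0 : 0 ≤ D)
    (h : ∀ ℓ : ℕ, -C ≤ ∑ i ∈ Finset.range ℓ, (w i : ℝ))
    (hD : ∀ i, (w i : ℝ) ≤ D) : MeanPayoffSeq w := by
  unfold MeanPayoffSeq
  set a : ℕ → ℝ := fun ℓ => (∑ i ∈ Finset.range ℓ, (w i : ℝ)) / ℓ with ha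
  have key : ∀ ℓ : ℕ, -C / ℓ ≤ a ℓ := by
    intro ℓ
    rcases Nat.eq_zero_or_pos ℓ with h0 | h0
    · subst h0; simp [ha]
    · have hp : (0:ℝ) < ℓ := by exact_mod_cast h0
      exact div_le_div_of_nonneg_right (h ℓ) hp.le |>.trans_eq rfl
  have haD : ∀ ℓ, a ℓ ≤ D := by
    intro ℓ
    rcases Nat.eq_zero_or_pos ℓ with h0 | h0
    · subst h0; simpa [ha] using hD0
    · have hp : (0:ℝ) < ℓ := by exact_mod_cast h0
      rw [ha, div_le_iff₀ hp]
      calc ∑ i ∈ Finset.range ℓ, (w i : ℝ) ≤ ∑ _i ∈ Finset.range ℓ, D :=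
            Finset.sum_le_sum fun i _ => hD i
        _ = ℓ * D := by simp [mul_comm]
        _ = D * ℓ := by ring
  have hb : Tendsto (fun ℓ : ℕ => -C / (ℓ:ℝ)) atTop (nhds 0) :=
    tendsto_const_div_atTop_nhds_zero_nat (-C)
  have h0 : atTop.liminf (fun ℓ : ℕ => -C / (ℓ:ℝ)) = 0 := hb.liminf_eq
  have hbd : IsBoundedUnder (· ≥ ·) atTop (fun ℓ : ℕ => -C / (ℓ:ℝ)) := by
    refine Filter.isBoundedUnder_of ⟨-C, fun ℓ => ?_⟩
    rcases Nat.eq_zero_or_pos ℓ with h0' | h0'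
    · subst h0'; simpa using hC
    · have h1 : (1:ℝ) ≤ ℓ := by exact_mod_cast h0'
      have := div_le_self hC h1
      simp only [neg_div]
      linarith
  have hcb : IsCoboundedUnder (· ≥ ·) atTop a :=
    IsBoundedUnder.isCoboundedUnder_ge (Filter.isBoundedUnder_of ⟨D, haD⟩)
  calc (0:ℝ) = atTop.liminf (fun ℓ : ℕ => -C / (ℓ:ℝ)) := h0.symm
    _ ≤ atTop.liminf a := Filter.liminf_le_liminf (Eventually.of_forall key) hbd hcb

lemma cycle_nonneg_of_satMP {V : Type} {E : Set (V × ℤ × V)} (hE : SatMP E)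
    {L : ℕ} {f : ℕ → V} {w : ℕ → ℤ} (hL : 0 < L) (hg : GoodF E L f w) (hf : f L = f 0) :
    0 ≤ ∑ i ∈ Finset.range L, w i := by
  by_contra hneg
  push_neg at hneg
  set π : ℕ → V × ℤ × V := fun i => (f (i % L), w (i % L), f (i % L + 1)) with hπ
  have hmod : ∀ i : ℕ, i % L < L := fun i => Nat.mod_lt i hL
  have hinf : InfPath E π := by
    constructor
    · intro i; exact hg _ (hmod i)
    · intro i
      show f (i % L + 1) = f ((i + 1) % L)
      have hstep : (i + 1) % L = (i % L + 1) % L := by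
        conv_lhs => rw [← Nat.mod_add_div i L]
        rw [Nat.add_right_comm, Nat.add_mul_mod_self_left]
      rcases eq_or_lt_of_le (Nat.succ_le_of_lt (hmod i)) with h | h
      · have h' : i % L + 1 = L := h
        rw [hstep, h', Nat.mod_self]
        exact hf
      · rw [hstep, Nat.mod_eq_of_lt h]
  have hmp := hE π hinf
  unfold MeanPayoffSeq at hmp
  set a : ℕ → ℝ := fun ℓ => (∑ i ∈ Finset.range ℓ, ((w (i % L) : ℝ))) / ℓ with ha
  have hmp' : 0 ≤ atTop.liminf a := hmp
  -- the value at multiples of L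
  set s : ℝ := ∑ i ∈ Finset.range L, (w i : ℝ) with hs
  have hs_neg : s < 0 := by
    have : (∑ i ∈ Finset.range L, w i : ℝ) < 0 := by exact_mod_cast hneg
    simpa [hs] using this
  have hval : ∀ k : ℕ, 0 < k → a (k * L) = s / L := by
    intro k hk
    have hsum : ∑ i ∈ Finset.range (k * L), ((w (i % L)) : ℝ) = k * s :=
      sum_range_mul_mod (fun i => (w i : ℝ)) L k
    have hkL : ((k * L : ℕ) : ℝ) = (k : ℝ) * L := by push_cast; ring
    have hk0 : (k : ℝ) ≠ 0 := by positivity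
    rw [ha]
    show (∑ i ∈ Finset.range (k * L), ((w (i % L)) : ℝ)) / ((k * L : ℕ) : ℝ) = s / L
    rw [hsum, hkL, mul_div_mul_left _ _ hk0]
  have hfreq : ∃ᶠ ℓ in atTop, a ℓ ≤ s / L := by
    rw [Filter.frequently_atTop]
    intro m
    refine ⟨(m + 1) * L, ?_, le_of_eq (hval (m + 1) (Nat.succ_pos m))⟩
    calc m ≤ m + 1 := Nat.le_succ m
      _ ≤ (m + 1) * L := Nat.le_mul_of_pos_right _ hL
  have hbd : IsBoundedUnder (· ≥ ·) atTop a := by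
    set B : ℝ := ∑ i ∈ Finset.range L, |(w i : ℝ)| with hB
    have hB0 : 0 ≤ B := Finset.sum_nonneg fun i _ => abs_nonneg _
    refine Filter.isBoundedUnder_of ⟨-B, fun ℓ => ?_⟩
    show -B ≤ a ℓ
    rcases Nat.eq_zero_or_pos ℓ with h0 | h0
    · subst h0; simpa [ha] using hB0
    · have hp : (0:ℝ) < ℓ := by exact_mod_cast h0
      have hterm : ∀ i, -B ≤ (w (i % L) : ℝ) := by
        intro i
        have h1 : |(w (i % L) : ℝ)| ≤ B :=
          Finset.single_le_sum (fun i _ => abs_nonneg ((w i : ℝ)))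
            (Finset.mem_range.mpr (hmod i))
        linarith [(abs_le.mp h1).1]
      have hsum : -(ℓ : ℝ) * B ≤ ∑ i ∈ Finset.range ℓ, (w (i % L) : ℝ) := by
        calc -(ℓ:ℝ) * B = ∑ _i ∈ Finset.range ℓ, (-B) := by
              rw [Finset.sum_const, Finset.card_range, nsmul_eq_mul]; ring
          _ ≤ _ := Finset.sum_le_sum fun i _ => hterm i
      rw [ha, le_div_iff₀ hp]
      calc -B * ℓ = -(ℓ:ℝ) * B := by ring
        _ ≤ _ := hsum
  have := Filter.liminf_le_of_frequently_le hfreq hbd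
  have hsl : s / L < 0 := div_neg_of_neg_of_pos hs_neg (by exact_mod_cast hL)
  linarith [hmp'.trans this]

lemma shorten {V : Type} [Fintype V] {E : Set (V × ℤ × V)} {n : ℕ} (hn : 0 < n)
    (hcard : Fintype.card V ≤ n)
    (hcyc : ∀ (L : ℕ) (f : ℕ → V) (w : ℕ → ℤ), GoodF E L f w → 0 < L → f L = f 0 →
      0 ≤ ∑ i ∈ Finset.range L, w i) :
    ∀ (L : ℕ) (f : ℕ → V) (w : ℕ → ℤ), GoodF E L f w →
      ∃ (L' : ℕ) (f' : ℕ → V) (w' : ℕ → ℤ), GoodF E L' f' w' ∧ L' < n ∧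
        f' 0 = f 0 ∧ f' L' = f L ∧
        ∑ i ∈ Finset.range L', w' i ≤ ∑ i ∈ Finset.range L, w i := by
  intro L
  induction L using Nat.strong_induction_on with
  | _ L ih =>
  intro f w hg
  by_cases hLn : L < n
  · exact ⟨L, f, w, hg, hLn, rfl, rfl, le_refl _⟩
  push_neg at hLn
  have hcard' : Fintype.card V < Fintype.card (Fin (L + 1)) := by
    simp only [Fintype.card_fin]; omega
  obtain ⟨x, y, hxy, hfxy⟩ :=
    Fintype.exists_ne_map_eq_of_card_lt (fun t : Fin (L + 1) => f t) hcard'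
  obtain ⟨i, j, hij, hjL, hfij⟩ : ∃ i j : ℕ, i < j ∧ j ≤ L ∧ f i = f j := by
    rcases lt_or_gt_of_ne hxy with h | h
    · exact ⟨x, y, h, Nat.lt_succ_iff.mp y.isLt, hfxy⟩
    · exact ⟨y, x, h, Nat.lt_succ_iff.mp x.isLt, hfxy.symm⟩
  obtain ⟨d, hd⟩ : ∃ d, d = j - i := ⟨_, rfl⟩
  have hd0 : 0 < d := by omega
  have hji : j = i + d := by omega
  obtain ⟨L2, hL2def⟩ : ∃ L2, L2 = L - d := ⟨_, rfl⟩
  have hiL2 : i ≤ L2 := by omega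
  have hL2d : L2 + d = L := by omega
  have hL2lt : L2 < L := by omega
  set f2 : ℕ → V := fun k => if k ≤ i then f k else f (k + d) with hf2
  set w2 : ℕ → ℤ := fun k => if k < i then w k else w (k + d) with hw2
  have hshift : ∀ k, i ≤ k → f2 k = f (k + d) := by
    intro k hk
    rcases eq_or_lt_of_le hk with h | h
    · subst h
      show (if i ≤ i then f i else f (i + d)) = f (i + d)
      rw [if_pos (le_refl i), hfij, hji]
    · show (if k ≤ i then f k else f (k + d)) = f (k + d)
      rw [if_neg (by omega)]
  have hg2 : GoodF E L2 f2 w2 := by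
    intro k hk
    by_cases hki : k < i
    · have h1 : f2 k = f k := if_pos (le_of_lt hki)
      have h2 : f2 (k + 1) = f (k + 1) := if_pos hki
      have h3 : w2 k = w k := if_pos hki
      rw [h1, h2, h3]
      exact hg k (by omega)
    · push_neg at hki
      have h1 : f2 k = f (k + d) := hshift k hki
      have h2 : f2 (k + 1) = f (k + d + 1) := by
        rw [hshift (k + 1) (by omega)]; congr 1; omega
      have h3 : w2 k = w (k + d) := if_neg (by omega)
      rw [h1, h2, h3]
      exact hg (k + d) (by omega)
  have hstart : f2 0 = f 0 := if_pos (Nat.zero_le i)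
  have hend : f2 L2 = f L := by rw [hshift L2 hiL2, hL2d]
  have hcycle : 0 ≤ ∑ t ∈ Finset.range d, w (i + t) := by
    refine hcyc d (fun t => f (i + t)) (fun t => w (i + t)) ?_ hd0 ?_
    · intro t ht
      have h1 : i + (t + 1) = i + t + 1 := by omega
      simpa [h1] using hg (i + t) (by omega)
    · show f (i + d) = f (i + 0)
      rw [Nat.add_zero, ← hji, ← hfij]
  -- sum computations
  have e1 : ∑ k ∈ Finset.range L2, w2 k
      = ∑ k ∈ Finset.Ico 0 i, w2 k + ∑ k ∈ Finset.Ico i L2, w2 k := by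
    rw [Finset.sum_Ico_consecutive w2 (Nat.zero_le i) hiL2, Finset.range_eq_Ico]
  have e2 : ∑ k ∈ Finset.Ico 0 i, w2 k = ∑ k ∈ Finset.Ico 0 i, w k :=
    Finset.sum_congr rfl fun k hk => if_pos (Finset.mem_Ico.mp hk).2
  have e3 : ∑ k ∈ Finset.Ico i L2, w2 k = ∑ t ∈ Finset.range (L2 - i), w (j + t) := by
    rw [Finset.sum_Ico_eq_sum_range]
    refine Finset.sum_congr rfl fun t _ => ?_
    show (if i + t < i then w (i + t) else w (i + t + d)) = w (j + t)
    rw [if_neg (by omega)]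
    congr 1
    omega
  have e4 : ∑ k ∈ Finset.range L, w k
      = ∑ k ∈ Finset.Ico 0 i, w k + ∑ k ∈ Finset.Ico i j, w k
        + ∑ k ∈ Finset.Ico j L, w k := by
    rw [Finset.sum_Ico_consecutive w (Nat.zero_le i) hij.le,
      Finset.sum_Ico_consecutive w (Nat.zero_le j) hjL, Finset.range_eq_Ico]
  have e5 : ∑ k ∈ Finset.Ico i j, w k = ∑ t ∈ Finset.range d, w (i + t) := by
    rw [Finset.sum_Ico_eq_sum_range, ← hd]
  have e6 : ∑ k ∈ Finset.Ico j L, w k = ∑ t ∈ Finset.range (L2 - i), w (j + t) := by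
    rw [Finset.sum_Ico_eq_sum_range]
    have : L - j = L2 - i := by omega
    rw [this]
  have hle : ∑ k ∈ Finset.range L2, w2 k ≤ ∑ k ∈ Finset.range L, w k := by
    rw [e1, e2, e3, e4, e5, e6]; linarith
  obtain ⟨L', f', w', hg', hL'n, h0', hend', hsum'⟩ := ih L2 hL2lt f2 w2 hg2
  exact ⟨L', f', w', hg', hL'n, by rw [h0', hstart], by rw [hend', hend],
    le_trans hsum' hle⟩

lemma fp_of_list {V : Type} {E : Set (V × ℤ × V)} :
    ∀ (p : List (V × ℤ × V)) (u : V), FinPath E u p →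
      ∃ (f : ℕ → V) (w : ℕ → ℤ), GoodF E p.length f w ∧ f 0 = u ∧
        f p.length = lastV u p ∧ ∑ i ∈ Finset.range p.length, w i = pathWeight p := by
  intro p
  induction p with
  | nil =>
      intro u _
      exact ⟨fun _ => u, fun _ => 0, fun i hi => absurd hi (by simp), rfl, rfl, by
        simp [pathWeight]⟩
  | cons e p ihp =>
      intro u hp
      obtain ⟨hmem, hchain, hhead⟩ := hp
      have hu : e.1 = u := hhead (by simp)
      replace hchain := List.isChain_cons.mp hchain
      obtain ⟨hlink, hchain'⟩ := hchain
      have htail : FinPath E e.2.2 p := by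
        refine ⟨fun x hx => hmem x (List.mem_cons_of_mem _ hx), hchain', ?_⟩
        intro h
        have := hlink (p.head h) (by rw [List.head?_eq_head h]; rfl)
        exact this.symm
      obtain ⟨f, w, hg, hf0, hflen, hsum⟩ := ihp e.2.2 htail
      have hlast : lastV u (e :: p) = lastV e.2.2 p := by
        cases p with
        | nil => simp [lastV, List.getLastD_cons]
        | cons e' p' =>
            show ((e' :: p').getLastD e).2.2 = ((e' :: p').getLastD (e.2.2, 0, e.2.2)).2.2
            rw [List.getLastD_cons, List.getLastD_cons]
      refine ⟨fun i => Nat.casesOn i u f, fun i => Nat.casesOn i e.2.1 w, ?_, rfl, ?_, ?_⟩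
      · intro i hi
        cases i with
        | zero =>
            show (u, e.2.1, f 0) ∈ E
            rw [hf0, ← hu]
            exact hmem e (by simp)
        | succ i =>
            show (f i, w i, f (i + 1)) ∈ E
            exact hg i (by simpa using hi)
      · show (fun i => Nat.casesOn i u f : ℕ → V) (p.length + 1) = lastV u (e :: p)
        rw [hlast]
        exact hflen
      · rw [List.length_cons, Finset.sum_range_succ']
        show (∑ i ∈ Finset.range p.length, w i) + e.2.1 = pathWeight (e :: p)
        rw [hsum]
        simp [pathWeight]
        ring

/-- for all `n, N ≥ 1`, the `(-N,N)`-linear graph on the interval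
`(-nN, nN)` of integers is `(n, (-N,N))`-universal. -/
theorem linear_interval_universal (n N : ℕ) (hn : 1 ≤ n) (hN : 1 ≤ N) :
    Universal n (Wball N) (LinE (Wball N) (Set.Ioo (-(n * N : ℤ)) (n * N : ℤ))) := by
  have hnN : (1 : ℤ) ≤ (n : ℤ) * N := by
    have : (1:ℤ) ≤ (n:ℤ) := by exact_mod_cast hn
    have : (1:ℤ) ≤ (N:ℤ) := by exact_mod_cast hN
    nlinarith [show (1:ℤ) ≤ (n:ℤ) from by exact_mod_cast hn]
  constructor
  · -- the linear graph satisfies mean payoff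
    intro π hπ
    obtain ⟨hmem, hcons⟩ := hπ
    have hv : ∀ i, (π i).1 ∈ Set.Ioo (-(n * N : ℤ)) (n * N : ℤ) := fun i => (hmem i).1
    have hstep : ∀ i, (π (i + 1)).1 - (π i).1 ≤ (π i).2.1 := by
      intro i
      have h1 := (hmem i).2.2.2
      rw [hcons i] at h1
      exact h1
    apply meanPayoffSeq_of_bdd_sums _ (2 * ((n : ℝ) * N)) ((N : ℝ)) (by positivity)
      (by positivity)
    · intro ℓ
      have hsum : (π ℓ).1 - (π 0).1 ≤ ∑ i ∈ Finset.range ℓ, (π i).2.1 := by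
        calc (π ℓ).1 - (π 0).1
            = ∑ i ∈ Finset.range ℓ, ((π (i + 1)).1 - (π i).1) :=
              (Finset.sum_range_sub (fun i => (π i).1) ℓ).symm
          _ ≤ _ := Finset.sum_le_sum fun i _ => hstep i
      have h0 := hv 0
      have hℓ := hv ℓ
      simp only [Set.mem_Ioo] at h0 hℓ
      have hZ : -(2 * ((n : ℤ) * N)) ≤ ∑ i ∈ Finset.range ℓ, (π i).2.1 := by
        have : -(2 * ((n : ℤ) * N)) ≤ (π ℓ).1 - (π 0).1 := by linarith [h0.1, h0.2, hℓ.1, hℓ.2]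
        linarith
      calc -(2 * ((n : ℝ) * N)) = ((-(2 * ((n : ℤ) * N)) : ℤ) : ℝ) := by push_cast; ring
        _ ≤ ((∑ i ∈ Finset.range ℓ, (π i).2.1 : ℤ) : ℝ) := by exact_mod_cast hZ
        _ = ∑ i ∈ Finset.range ℓ, ((π i).2.1 : ℝ) := by push_cast; rfl
    · intro i
      have := (hmem i).2.2.1
      simp only [Wball, Finset.mem_Ioo] at this
      have : (π i).2.1 ≤ (N : ℤ) := le_of_lt this.2
      exact_mod_cast this
  · -- universality
    intro G hcard hMP
    have hcyc : ∀ (L : ℕ) (f : ℕ → G.V) (w : ℕ → ℤ), GoodF G.E L f w → 0 < L →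
        f L = f 0 → 0 ≤ ∑ i ∈ Finset.range L, w i :=
      fun L f w hg hL hf => cycle_nonneg_of_satMP hMP hL hg hf
    have hshort := shorten (V := G.V) (by omega : 0 < n) hcard hcyc
    -- weights along paths in G lie in the open interval (-N, N)
    have hwB : ∀ (L : ℕ) (f : ℕ → G.V) (w : ℕ → ℤ), GoodF G.E L f w →
        ∀ i < L, -(N:ℤ) + 1 ≤ w i ∧ w i ≤ (N:ℤ) - 1 := by
      intro L f w hg i hi
      have := G.wt _ (hg i hi)
      simp only [Wball, Finset.mem_Ioo] at this
      omega
    -- bound on total weight of short paths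
    have hbound : ∀ (L : ℕ) (f : ℕ → G.V) (w : ℕ → ℤ), GoodF G.E L f w → L < n →
        -((n:ℤ) * N) < ∑ i ∈ Finset.range L, w i ∧
          ∑ i ∈ Finset.range L, w i < (n:ℤ) * N := by
      intro L f w hg hLn
      have hlow : (L:ℤ) * (-(N:ℤ) + 1) ≤ ∑ i ∈ Finset.range L, w i := by
        calc (L:ℤ) * (-(N:ℤ) + 1) = (Finset.range L).card • (-(N:ℤ) + 1) := by
              rw [Finset.card_range, nsmul_eq_mul]
          _ ≤ _ := Finset.card_nsmul_le_sum _ _ _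
                fun i hi => (hwB L f w hg i (Finset.mem_range.mp hi)).1
      have hhigh : ∑ i ∈ Finset.range L, w i ≤ (L:ℤ) * ((N:ℤ) - 1) := by
        calc ∑ i ∈ Finset.range L, w i
            ≤ (Finset.range L).card • ((N:ℤ) - 1) := Finset.sum_le_card_nsmul _ _ _
                fun i hi => (hwB L f w hg i (Finset.mem_range.mp hi)).2
          _ = (L:ℤ) * ((N:ℤ) - 1) := by rw [Finset.card_range, nsmul_eq_mul]
      have hL1 : (L:ℤ) ≤ (n:ℤ) - 1 := by
        have : (L:ℤ) < (n:ℤ) := by exact_mod_cast hLn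
        omega
      have hN1 : (1:ℤ) ≤ (N:ℤ) := by exact_mod_cast hN
      have hn1 : (1:ℤ) ≤ (n:ℤ) := by exact_mod_cast hn
      have hL0 : (0:ℤ) ≤ (L:ℤ) := Int.ofNat_nonneg L
      constructor
      · nlinarith [mul_le_mul_of_nonneg_right hL1 (by linarith : (0:ℤ) ≤ (N:ℤ) - 1)]
      · nlinarith [mul_le_mul_of_nonneg_right hL1 (by linarith : (0:ℤ) ≤ (N:ℤ) - 1)]
    -- least path weight to each vertex along short paths
    have hS : ∀ v : G.V, ∃ m : ℤ,
        (∃ (L : ℕ) (f : ℕ → G.V) (w : ℕ → ℤ), GoodF G.E L f w ∧ L < n ∧ f 0 = G.init ∧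
          f L = v ∧ ∑ i ∈ Finset.range L, w i = m) ∧
        ∀ z : ℤ, (∃ (L : ℕ) (f : ℕ → G.V) (w : ℕ → ℤ), GoodF G.E L f w ∧ L < n ∧
          f 0 = G.init ∧ f L = v ∧ ∑ i ∈ Finset.range L, w i = z) → m ≤ z := by
      intro v
      apply Int.exists_least_of_bdd
      · refine ⟨-((n:ℤ) * N), ?_⟩
        rintro z ⟨L, f, w, hg, hLn, _, _, hsum⟩
        have := (hbound L f w hg hLn).1
        rw [hsum] at this
        exact le_of_lt this
      · obtain ⟨p, hp, hlast⟩ := G.reach v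
        obtain ⟨f, w, hg, h0, hlen, _⟩ := fp_of_list p G.init hp
        obtain ⟨L', f', w', hg', hL', h0', hend', _⟩ := hshort p.length f w hg
        exact ⟨_, L', f', w', hg', hL', by rw [h0', h0], by rw [hend', hlen, hlast], rfl⟩
    choose φ hφmem hφmin using hS
    have hIoo : ∀ v : G.V, φ v ∈ Set.Ioo (-(n * N : ℤ)) (n * N : ℤ) := by
      intro v
      obtain ⟨L, f, w, hg, hLn, _, _, hsum⟩ := hφmem v
      have := hbound L f w hg hLn
      rw [hsum] at this
      exact Set.mem_Ioo.mpr this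
    refine ⟨φ, ?_⟩
    intro e he
    -- extend the minimal path to e.1 by the edge e
    have hkey : φ e.2.2 ≤ φ e.1 + e.2.1 := by
      obtain ⟨L, f, w, hg, hLn, h0, hLv, hsum⟩ := hφmem e.1
      set f' : ℕ → G.V := fun k => if k ≤ L then f k else e.2.2 with hf'
      set w' : ℕ → ℤ := fun k => if k < L then w k else e.2.1 with hw'
      have hg' : GoodF G.E (L + 1) f' w' := by
        intro k hk
        rcases lt_or_ge k L with h | h
        · have h1 : f' k = f k := if_pos (le_of_lt h)
          have h2 : f' (k + 1) = f (k + 1) := if_pos h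
          have h3 : w' k = w k := if_pos h
          rw [h1, h2, h3]
          exact hg k h
        · have hkL : k = L := by omega
          subst hkL
          have h1 : f' k = f k := if_pos (le_refl k)
          have h2 : f' (k + 1) = e.2.2 := if_neg (by omega)
          have h3 : w' k = e.2.1 := if_neg (by omega)
          rw [h1, h2, h3, hLv]
          exact he
      have hsum' : ∑ i ∈ Finset.range (L + 1), w' i = φ e.1 + e.2.1 := by
        rw [Finset.sum_range_succ]
        have h3 : w' L = e.2.1 := if_neg (by omega)
        have : ∑ i ∈ Finset.range L, w' i = ∑ i ∈ Finset.range L, w i :=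
          Finset.sum_congr rfl fun i hi => if_pos (Finset.mem_range.mp hi)
        rw [h3, this, hsum]
      obtain ⟨L2, f2, w2, hg2, hL2n, h02, hend2, hsum2⟩ := hshort (L + 1) f' w' hg'
      rw [hsum'] at hsum2
      refine le_trans (hφmin e.2.2 _ ⟨L2, f2, w2, hg2, hL2n, ?_, ?_, rfl⟩) hsum2
      · rw [h02]
        show (if 0 ≤ L then f 0 else e.2.2) = G.init
        rw [if_pos (Nat.zero_le L), h0]
      · rw [hend2]
        show (if L + 1 ≤ L then f (L + 1) else e.2.2) = e.2.2
        rw [if_neg (by omega)]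
    refine ⟨hIoo e.1, hIoo e.2.2, G.wt e he, by linarith⟩
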